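/- Fix ρ ≥ 1. Define Θ(η,θ) = η·(2(θ-1)² - (θ+1)θ(3η+2)ρ² - (θ+1)ηρ²) / (2ρ·((1+θ)²η²ρ² + 1)). Then there exist η > 0 and θ ∈ (0,1) such that Θ(η,θ) ∈ (0,1). -/
import Mathlib


/-- For any condition number ρ ≥ 1, there exist η > 0 and θ ∈ (0,1) such that the
FEDL contraction factor Θ(η,θ) lies in (0,1). -/
theorem stmt_5 (ρ : ℝ) (hρ : 1 ≤ ρ) :
    ∃ η : ℝ, 0 < η ∧ ∃ θ : ℝ, θ ∈ Set.Ioo (0 : ℝ) 1 ∧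
      (η * (2 * (θ - 1) ^ 2 - (θ + 1) * θ * (3 * η + 2) * ρ ^ 2 - (θ + 1) * η * ρ ^ 2) /
        (2 * ρ * ((1 + θ) ^ 2 * η ^ 2 * ρ ^ 2 + 1))) ∈ Set.Ioo (0 : ℝ) 1 := by
  have hρ0 : (0:ℝ) < ρ := by linarith
  have hs : (1:ℝ) ≤ ρ ^ 2 := by nlinarith
  have hs0 : (0:ℝ) < ρ ^ 2 := by positivity
  refine ⟨1 / (4 * ρ ^ 2), by positivity, 1 / (8 * ρ ^ 2), ⟨by positivity, ?_⟩, ?_, ?_⟩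
  · rw [div_lt_one (by positivity)]; nlinarith
  · apply div_pos _ (by positivity)
    have key : (1 / (4 * ρ ^ 2)) *
        (2 * (1 / (8 * ρ ^ 2) - 1) ^ 2
          - (1 / (8 * ρ ^ 2) + 1) * (1 / (8 * ρ ^ 2)) * (3 * (1 / (4 * ρ ^ 2)) + 2) * ρ ^ 2
          - (1 / (8 * ρ ^ 2) + 1) * (1 / (4 * ρ ^ 2)) * ρ ^ 2)
        = (384 * (ρ ^ 2) ^ 2 - 168 * ρ ^ 2 + 5) / (1024 * (ρ ^ 2) ^ 3) := by
      field_simp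
      ring
    rw [key]
    apply div_pos _ (by positivity)
    nlinarith [sq_nonneg (ρ ^ 2 - 1)]
  · rw [div_lt_one (by positivity)]
    have key : (1 / (4 * ρ ^ 2)) *
        (2 * (1 / (8 * ρ ^ 2) - 1) ^ 2
          - (1 / (8 * ρ ^ 2) + 1) * (1 / (8 * ρ ^ 2)) * (3 * (1 / (4 * ρ ^ 2)) + 2) * ρ ^ 2
          - (1 / (8 * ρ ^ 2) + 1) * (1 / (4 * ρ ^ 2)) * ρ ^ 2)
        = (384 * (ρ ^ 2) ^ 2 - 168 * ρ ^ 2 + 5) / (1024 * (ρ ^ 2) ^ 3) := by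
      field_simp
      ring
    rw [key]
    have h1 : (384 * (ρ ^ 2) ^ 2 - 168 * ρ ^ 2 + 5) / (1024 * (ρ ^ 2) ^ 3) < 1 := by
      rw [div_lt_one (by positivity)]
      nlinarith [sq_nonneg (ρ ^ 2 - 1), pow_le_pow_left₀ (by norm_num : (0:ℝ) ≤ 1) hs 3,
        mul_le_mul_of_nonneg_left hs (by positivity : (0:ℝ) ≤ (ρ^2)^2)]
    have h2 : (1:ℝ) < 2 * ρ * ((1 + 1 / (8 * ρ ^ 2)) ^ 2 * (1 / (4 * ρ ^ 2)) ^ 2 * ρ ^ 2 + 1) := by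
      nlinarith [sq_nonneg ((1 + 1 / (8 * ρ ^ 2)) * (1 / (4 * ρ ^ 2)) * ρ), hρ0]
    linarith
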